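/- Let E be a uniformly convex Banach space with modulus of convexity δ_E. Then for any ε, η with 0 < ε/2 < η < ε < 2, one has δ_E(η)/η ≤ δ_E(ε)/ε − 2((ε−η)/(ε·η))·δ_E(r(ε)), where r(ε) = (1/4)(ε/2 − δ_E(ε)). -/

import Mathlib

open Set Metric

/-- Modulus of convexity of a normed space `E`. -/
noncomputable def modConv (E : Type*) [NormedAddCommGroup E] [NormedSpace ℝ E] (ε : ℝ) : ℝ :=
  sInf {d : ℝ | ∃ x y : E, ‖x‖ ≤ 1 ∧ ‖y‖ ≤ 1 ∧ ‖x - y‖ = ε ∧ d = 1 - ‖x + y‖ / 2}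

/-- `E` is uniformly convex: the modulus of convexity is positive on `(0,2]`. -/
def UnifConvexSpace (E : Type*) [NormedAddCommGroup E] [NormedSpace ℝ E] : Prop :=
  ∀ ε ∈ Set.Ioc (0:ℝ) 2, 0 < modConv E ε

/-- Modulus of nonconvexity of a set `A`. -/
noncomputable def modNonconv {E : Type*} [NormedAddCommGroup E] [NormedSpace ℝ E]
    (A : Set E) (ε : ℝ) : ℝ :=
  if ε = 0 then 0 else
    sInf {γ : ℝ | 0 < γ ∧ ∀ x₁ ∈ A, ∀ x₂ ∈ A, ‖x₁ - x₂‖ ≤ ε →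
      (Metric.closedBall (midpoint ℝ x₁ x₂) γ ∩ A).Nonempty}

/-- Modulus of convexity of a convex set `A`. -/
noncomputable def modConvSet {E : Type*} [NormedAddCommGroup E] [NormedSpace ℝ E]
    (A : Set E) (ε : ℝ) : ℝ :=
  sSup {δ : ℝ | 0 ≤ δ ∧ ∀ x₁ ∈ A, ∀ x₂ ∈ A, ‖x₁ - x₂‖ = ε →
      Metric.closedBall (midpoint ℝ x₁ x₂) δ ⊆ A}

noncomputable def rfun (E : Type*) [NormedAddCommGroup E] [NormedSpace ℝ E] (ε : ℝ) : ℝ :=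
  (1/4) * (ε/2 - modConv E ε)

section aux
variable {E : Type*} [NormedAddCommGroup E] [NormedSpace ℝ E]

lemma modConv_bddBelow (c : ℝ) :
    BddBelow {d : ℝ | ∃ x y : E, ‖x‖ ≤ 1 ∧ ‖y‖ ≤ 1 ∧ ‖x - y‖ = c ∧ d = 1 - ‖x + y‖ / 2} := by
  refine ⟨0, ?_⟩
  rintro d ⟨x, y, hx, hy, -, rfl⟩
  have := norm_add_le x y
  linarith

lemma modConv_le_pair {c : ℝ} {x y : E} (hx : ‖x‖ ≤ 1) (hy : ‖y‖ ≤ 1)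
    (hxy : ‖x - y‖ = c) : modConv E c ≤ 1 - ‖x + y‖ / 2 := by
  unfold modConv
  exact csInf_le (modConv_bddBelow c) ⟨x, y, hx, hy, hxy, rfl⟩

lemma modConv_nonneg (c : ℝ) : 0 ≤ modConv E c := by
  unfold modConv
  apply Real.sInf_nonneg
  rintro d ⟨x, y, hx, hy, -, rfl⟩
  have := norm_add_le x y
  linarith

lemma modConv_le_pair_ge {c : ℝ} {a b : E} (hc : 0 < c) (ha : ‖a‖ ≤ 1) (hb : ‖b‖ ≤ 1)
    (hab : c ≤ ‖a - b‖) : modConv E c ≤ 1 - ‖a + b‖ / 2 := by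
  have hab0 : 0 < ‖a - b‖ := lt_of_lt_of_le hc hab
  set κ := c / ‖a - b‖ with hκdef
  have hκ0 : 0 < κ := div_pos hc hab0
  have hκ1 : κ ≤ 1 := (div_le_one hab0).2 hab
  set a' := ((1+κ)/2) • a + ((1-κ)/2) • b with ha'
  set b' := ((1-κ)/2) • a + ((1+κ)/2) • b with hb'
  have hd : a' - b' = κ • (a - b) := by rw [ha', hb']; module
  have hs : a' + b' = a + b := by rw [ha', hb']; module
  have hnd : ‖a' - b'‖ = c := by
    rw [hd, norm_smul, Real.norm_eq_abs, abs_of_pos hκ0, hκdef,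
      div_mul_cancel₀ _ (ne_of_gt hab0)]
  have hna : ‖a'‖ ≤ 1 := by
    calc ‖a'‖ ≤ ‖((1+κ)/2) • a‖ + ‖((1-κ)/2) • b‖ := norm_add_le _ _
    _ = ((1+κ)/2) * ‖a‖ + ((1-κ)/2) * ‖b‖ := by
        rw [norm_smul, norm_smul, Real.norm_eq_abs, Real.norm_eq_abs,
          abs_of_nonneg (by linarith), abs_of_nonneg (by linarith)]
    _ ≤ 1 := by nlinarith [norm_nonneg a, norm_nonneg b]
  have hnb : ‖b'‖ ≤ 1 := by
    calc ‖b'‖ ≤ ‖((1-κ)/2) • a‖ + ‖((1+κ)/2) • b‖ := norm_add_le _ _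
    _ = ((1-κ)/2) * ‖a‖ + ((1+κ)/2) * ‖b‖ := by
        rw [norm_smul, norm_smul, Real.norm_eq_abs, Real.norm_eq_abs,
          abs_of_nonneg (by linarith), abs_of_nonneg (by linarith)]
    _ ≤ 1 := by nlinarith [norm_nonneg a, norm_nonneg b]
  have := modConv_le_pair hna hnb hnd
  rwa [hs] at this

lemma modConv_set_nonempty {c : ℝ} (h : 0 < modConv E c) :
    Set.Nonempty {d : ℝ | ∃ x y : E, ‖x‖ ≤ 1 ∧ ‖y‖ ≤ 1 ∧ ‖x - y‖ = c ∧ d = 1 - ‖x + y‖ / 2} := by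
  by_contra h'
  rw [Set.not_nonempty_iff_eq_empty] at h'
  unfold modConv at h
  rw [h', Real.sInf_empty] at h
  exact lt_irrefl _ h

lemma exists_unit (hE : UnifConvexSpace E) : ∃ e : E, ‖e‖ = 1 := by
  obtain ⟨d, x, y, hx, hy, hxy, -⟩ :=
    modConv_set_nonempty (hE 2 ⟨two_pos, le_refl 2⟩)
  refine ⟨x, ?_⟩
  have h1 := norm_sub_le x y
  rw [hxy] at h1
  linarith

lemma modConv_le_half (hE : UnifConvexSpace E) {c : ℝ} (hc0 : 0 ≤ c) (hc2 : c < 2) :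
    modConv E c ≤ c / 2 := by
  obtain ⟨e, he⟩ := exists_unit hE
  have h1 : ‖(1 - c) • e‖ ≤ 1 := by
    rw [norm_smul, Real.norm_eq_abs, he, mul_one, abs_le]
    constructor <;> linarith
  have h2 : ‖e - (1 - c) • e‖ = c := by
    have h : e - (1 - c) • e = c • e := by module
    rw [h, norm_smul, Real.norm_eq_abs, he, mul_one, abs_of_nonneg hc0]
  have h3 : ‖e + (1 - c) • e‖ = 2 - c := by
    have h : e + (1 - c) • e = (2 - c) • e := by module
    rw [h, norm_smul, Real.norm_eq_abs, he, mul_one, abs_of_nonneg (by linarith)]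
  have := modConv_le_pair (le_of_eq he) h1 h2
  rw [h3] at this
  linarith

end aux

set_option maxHeartbeats 2000000 in
/-- Lemma 1.2. -/
theorem stmt1 {E : Type*} [NormedAddCommGroup E] [NormedSpace ℝ E] [CompleteSpace E]
    (hE : UnifConvexSpace E)
    (ε η : ℝ) (h1 : 0 < ε/2) (h2 : ε/2 < η) (h3 : η < ε) (h4 : ε < 2) :
    modConv E η / η ≤
      modConv E ε / ε - 2 * ((ε - η) / (ε * η)) * modConv E (rfun E ε) := by
  have hη : 0 < η := by linarith
  have hε : 0 < ε := by linarith
  have hδε_le : modConv E ε ≤ ε / 2 := modConv_le_half hE hε.le h4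
  have hδε_nn : 0 ≤ modConv E ε := modConv_nonneg ε
  set r := rfun E ε with hrdef
  have hr_nn : 0 ≤ r := by rw [hrdef]; unfold rfun; linarith
  rcases eq_or_lt_of_le hr_nn with hr0 | hrpos
  · -- degenerate case : r = 0, i.e. modConv E ε = ε/2
    have hδεeq : modConv E ε = ε / 2 := by
      have h := hr0
      rw [hrdef] at h; unfold rfun at h; linarith
    have hmz : modConv E r = 0 := by
      rw [← hr0]
      have h2' : modConv E (0:ℝ) ≤ 0 / 2 := modConv_le_half hE le_rfl two_pos
      have h3' : 0 ≤ modConv E (0:ℝ) := modConv_nonneg 0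
      linarith
    rw [hmz, mul_zero, sub_zero, hδεeq]
    have key : modConv E η ≤ η / 2 := modConv_le_half hE hη.le (by linarith)
    rw [div_le_div_iff₀ hη hε]
    have hk := mul_le_mul_of_nonneg_right key hε.le
    linarith
  · -- main case : r > 0
    have hrval : modConv E ε = ε / 2 - 4 * r := by
      have h := hrdef
      unfold rfun at h; linarith
    have hr2 : r ≤ 2 := by linarith
    have hδr : 0 < modConv E r := hE r ⟨hrpos, hr2⟩
    rw [div_le_iff₀ hη]
    have hrw : (modConv E ε / ε - 2 * ((ε - η) / (ε * η)) * modConv E r) * η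
        = (η / ε) * modConv E ε - 2 * (ε - η) / ε * modConv E r := by
      field_simp
    rw [hrw]
    apply le_of_forall_pos_le_add
    intro θ' hθ'
    set θ := min θ' (min (3 * r) (2 * modConv E r)) with hθdef
    have hθpos : 0 < θ := lt_min hθ' (lt_min (by linarith) (by linarith))
    have hθ3r : θ ≤ 3 * r := le_trans (min_le_right _ _) (min_le_left _ _)
    have hθ2δr : θ ≤ 2 * modConv E r := le_trans (min_le_right _ _) (min_le_right _ _)
    have hθθ' : θ ≤ θ' := min_le_left _ _
    obtain ⟨d, hdmem, hdlt⟩ :=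
      Real.lt_sInf_add_pos (modConv_set_nonempty (hE ε ⟨hε, h4.le⟩)) hθpos
    obtain ⟨x, y, hx, hy, hxy, rfl⟩ := hdmem
    have hdlt' : 1 - ‖x + y‖ / 2 < modConv E ε + θ := hdlt
    set m : E := (2:ℝ)⁻¹ • (x + y) with hmdef
    have hmnorm : ‖m‖ = ‖x + y‖ / 2 := by
      rw [hmdef, norm_smul, Real.norm_eq_abs, abs_of_nonneg (by norm_num : (0:ℝ) ≤ 2⁻¹)]
      ring
    have hm_le : ‖m‖ ≤ 1 - modConv E ε := by
      have := modConv_le_pair hx hy hxy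
      rw [hmnorm]; linarith
    have hm_gt : 1 - ‖m‖ < modConv E ε + θ := by rw [hmnorm]; exact hdlt'
    have hmpos : 0 < ‖m‖ := by linarith
    set u : E := ‖m‖⁻¹ • m with hudef
    have hu_norm : ‖u‖ = 1 := by
      rw [hudef, norm_smul, Real.norm_eq_abs, abs_of_pos (inv_pos.2 hmpos),
        inv_mul_cancel₀ (ne_of_gt hmpos)]
    have hmu : m = ‖m‖ • u := by
      rw [hudef, smul_smul, mul_inv_cancel₀ (ne_of_gt hmpos), one_smul]
    have hm1 : ‖m‖ ≤ 1 := by linarith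
    have hinv : 1 ≤ ‖m‖⁻¹ := by
      have hid : ‖m‖ * ‖m‖⁻¹ = 1 := mul_inv_cancel₀ (ne_of_gt hmpos)
      linarith [mul_le_mul_of_nonneg_left hm1 (inv_pos.2 hmpos).le]
    have hum : ‖u - m‖ = 1 - ‖m‖ := by
      have h : u - m = (‖m‖⁻¹ - 1) • m := by
        rw [hudef]; module
      rw [h, norm_smul, Real.norm_eq_abs, abs_of_nonneg (by linarith), sub_mul,
        inv_mul_cancel₀ (ne_of_gt hmpos), one_mul]
    have hxm : ‖x - m‖ = ε / 2 := by
      have h : x - m = (2:ℝ)⁻¹ • (x - y) := by rw [hmdef]; module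
      rw [h, norm_smul, Real.norm_eq_abs, abs_of_nonneg (by norm_num : (0:ℝ) ≤ 2⁻¹), hxy]
      ring
    have hym : ‖y - m‖ = ε / 2 := by
      have h : y - m = (2:ℝ)⁻¹ • (y - x) := by rw [hmdef]; module
      rw [h, norm_smul, Real.norm_eq_abs, abs_of_nonneg (by norm_num : (0:ℝ) ≤ 2⁻¹),
        norm_sub_rev, hxy]
      ring
    have hxu : r ≤ ‖x - u‖ := by
      have ht : ‖x - m‖ ≤ ‖x - u‖ + ‖u - m‖ := by
        calc ‖x - m‖ = ‖(x - u) + (u - m)‖ := by rw [sub_add_sub_cancel]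
        _ ≤ ‖x - u‖ + ‖u - m‖ := norm_add_le _ _
      rw [hxm, hum] at ht
      linarith
    have hyu : r ≤ ‖y - u‖ := by
      have ht : ‖y - m‖ ≤ ‖y - u‖ + ‖u - m‖ := by
        calc ‖y - m‖ = ‖(y - u) + (u - m)‖ := by rw [sub_add_sub_cancel]
        _ ≤ ‖y - u‖ + ‖u - m‖ := norm_add_le _ _
      rw [hym, hum] at ht
      linarith
    have hxu_sum : ‖x + u‖ ≤ 2 * (1 - modConv E r) := by
      have := modConv_le_pair_ge hrpos hx hu_norm.le hxu
      linarith
    have hyu_sum : ‖y + u‖ ≤ 2 * (1 - modConv E r) := by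
      have := modConv_le_pair_ge hrpos hy hu_norm.le hyu
      linarith
    set lam := η / ε with hlamdef
    set mu := (ε - η) / ε with hmudef
    have hlam_mu : lam + mu = 1 := by
      rw [hlamdef, hmudef]; field_simp; ring
    have hmu_pos : 0 < mu := div_pos (by linarith) hε
    have hlam_pos : 0 < lam := div_pos hη hε
    have hmu_lt_lam : mu < lam := by
      rw [hlamdef, hmudef, div_lt_div_iff₀ hε hε]
      exact mul_lt_mul_of_pos_right (by linarith) hε
    set s := mu * (modConv E ε + 2 * modConv E r) with hsdef
    have hs_nn : 0 ≤ s := by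
      rw [hsdef]; positivity
    set β := mu * ‖m‖ + s with hβdef
    have hβ_ge_mu : mu ≤ β := by
      rw [hβdef, hsdef]
      linarith [mul_lt_mul_of_pos_left hm_gt hmu_pos,
        mul_le_mul_of_nonneg_left hθ2δr hmu_pos.le]
    set u1 : E := lam • x + β • u with hu1def
    set v1 : E := lam • y + β • u with hv1def
    have hdiff : ‖u1 - v1‖ = η := by
      have h : u1 - v1 = lam • (x - y) := by rw [hu1def, hv1def]; module
      rw [h, norm_smul, Real.norm_eq_abs, abs_of_pos hlam_pos, hxy, hlamdef,
        div_mul_cancel₀ _ (ne_of_gt hε)]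
    have e2 : ‖(β - mu) • u‖ = β - mu := by
      rw [norm_smul, Real.norm_eq_abs, abs_of_nonneg (by linarith), hu_norm, mul_one]
    have hu1norm : ‖u1‖ ≤ 1 := by
      have hre : u1 = ((lam - mu) • x + (β - mu) • u) + mu • (x + u) := by
        rw [hu1def]; module
      have e1 : ‖(lam - mu) • x‖ ≤ lam - mu := by
        rw [norm_smul, Real.norm_eq_abs, abs_of_nonneg (by linarith)]
        exact mul_le_of_le_one_right (by linarith) hx
      have e3 : ‖mu • (x + u)‖ ≤ mu * (2 * (1 - modConv E r)) := by
        rw [norm_smul, Real.norm_eq_abs, abs_of_nonneg hmu_pos.le]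
        exact mul_le_mul_of_nonneg_left hxu_sum hmu_pos.le
      have hb : ‖u1‖ ≤ ‖(lam - mu) • x‖ + ‖(β - mu) • u‖ + ‖mu • (x + u)‖ := by
        calc ‖u1‖ ≤ ‖(lam - mu) • x + (β - mu) • u‖ + ‖mu • (x + u)‖ := by
              rw [hre]; exact norm_add_le _ _
        _ ≤ ‖(lam - mu) • x‖ + ‖(β - mu) • u‖ + ‖mu • (x + u)‖ :=
              add_le_add_left (norm_add_le _ _) _
      have hfin := mul_le_mul_of_nonneg_left hm_le hmu_pos.le
      linarith only [hb, e1, e2, e3, hfin, hβdef, hsdef, hlam_mu, hmu_pos]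
    have hv1norm : ‖v1‖ ≤ 1 := by
      have hre : v1 = ((lam - mu) • y + (β - mu) • u) + mu • (y + u) := by
        rw [hv1def]; module
      have e1 : ‖(lam - mu) • y‖ ≤ lam - mu := by
        rw [norm_smul, Real.norm_eq_abs, abs_of_nonneg (by linarith)]
        exact mul_le_of_le_one_right (by linarith) hy
      have e3 : ‖mu • (y + u)‖ ≤ mu * (2 * (1 - modConv E r)) := by
        rw [norm_smul, Real.norm_eq_abs, abs_of_nonneg hmu_pos.le]
        exact mul_le_mul_of_nonneg_left hyu_sum hmu_pos.le
      have hb : ‖v1‖ ≤ ‖(lam - mu) • y‖ + ‖(β - mu) • u‖ + ‖mu • (y + u)‖ := by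
        calc ‖v1‖ ≤ ‖(lam - mu) • y + (β - mu) • u‖ + ‖mu • (y + u)‖ := by
              rw [hre]; exact norm_add_le _ _
        _ ≤ ‖(lam - mu) • y‖ + ‖(β - mu) • u‖ + ‖mu • (y + u)‖ :=
              add_le_add_left (norm_add_le _ _) _
      have hfin := mul_le_mul_of_nonneg_left hm_le hmu_pos.le
      linarith only [hb, e1, e2, e3, hfin, hβdef, hsdef, hlam_mu, hmu_pos]
    have h2m : (2:ℝ) • m = x + y := by
      rw [hmdef, smul_smul]; norm_num
    have hxyu : x + y = (2 * ‖m‖) • u := by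
      rw [← h2m]
      nth_rewrite 1 [hmu]
      rw [smul_smul]
    have hsum : ‖u1 + v1‖ = 2 * lam * ‖m‖ + 2 * β := by
      have h : u1 + v1 = lam • (x + y) + (2 * β) • u := by
        rw [hu1def, hv1def]; module
      have h' : u1 + v1 = (2 * lam * ‖m‖ + 2 * β) • u := by
        rw [h, hxyu, smul_smul, ← add_smul]; ring_nf
      rw [h', norm_smul, Real.norm_eq_abs, hu_norm, mul_one, abs_of_nonneg (by linarith [mul_pos hlam_pos hmpos, hβ_ge_mu, hmu_pos])]
    have hfinal := modConv_le_pair hu1norm hv1norm hdiff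
    rw [hsum] at hfinal
    have hlm : lam * ‖m‖ + mu * ‖m‖ = ‖m‖ := by rw [← add_mul, hlam_mu, one_mul]
    have hld : lam * modConv E ε + mu * modConv E ε = modConv E ε := by
      rw [← add_mul, hlam_mu, one_mul]
    have h2mu : 2 * (ε - η) / ε = 2 * mu := by rw [hmudef]; ring
    rw [h2mu]
    -- modConv E η ≤ 1 - (lam*‖m‖ + β) = 1 - ‖m‖ - s < δε + θ - s
    linarith only [hfinal, hm_gt, hβdef, hsdef, hθθ', hlm, hld, hδr]
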